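/- For a lattice Γ in ℝ^d, the counting function g_Γ(m) of similar sublattices of index m is super-multiplicative: g_Γ(mn) ≥ g_Γ(m)·g_Γ(n) whenever gcd(m,n) = 1. -/

import Mathlib

open scoped RealInnerProductSpace

noncomputable section

/-- A non-zero linear similarity of ℝ^d: a linear map scaling all inner
products by a constant c > 0. -/
def IsSimilarity {d : ℕ} (S : EuclideanSpace ℝ (Fin d) →ₗ[ℝ] EuclideanSpace ℝ (Fin d)) : Prop :=
  ∃ c : ℝ, 0 < c ∧ ∀ u v : EuclideanSpace ℝ (Fin d), (inner ℝ (S u) (S v) : ℝ) = c * inner ℝ u v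

/-- A lattice in ℝ^d: a free ℤ-module of rank d whose ℝ-span is all of ℝ^d. -/
def IsLattice {d : ℕ} (Γ : AddSubgroup (EuclideanSpace ℝ (Fin d))) : Prop :=
  Nonempty (Module.Basis (Fin d) ℤ (AddSubgroup.toIntSubmodule Γ)) ∧
  Submodule.span ℝ (Γ : Set (EuclideanSpace ℝ (Fin d))) = ⊤

/-- The set of similar sublattices (SSLs) of Γ of index m: sublattices of Γ that
are images of Γ under a (non-zero) linear similarity and have index m in Γ. -/
def SSL {d : ℕ} (Γ : AddSubgroup (EuclideanSpace ℝ (Fin d))) (m : ℕ) :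
    Set (AddSubgroup (EuclideanSpace ℝ (Fin d))) :=
  {Λ | Λ ≤ Γ ∧ Λ.relIndex Γ = m ∧
    ∃ S : EuclideanSpace ℝ (Fin d) →ₗ[ℝ] EuclideanSpace ℝ (Fin d),
      IsSimilarity S ∧ S '' (Γ : Set (EuclideanSpace ℝ (Fin d))) = (Λ : Set (EuclideanSpace ℝ (Fin d)))}

/-- In an additive group, `relIndex H K` times any element of `K` lies in `H`. -/
private lemma nsmul_relIndex_mem {V : Type*} [AddCommGroup V] (H K : AddSubgroup V) {x : V}
    (hx : x ∈ K) : H.relIndex K • x ∈ H := by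
  have h := AddSubgroup.nsmul_index_mem (H.addSubgroupOf K) (⟨x, hx⟩ : K)
  rw [AddSubgroup.mem_addSubgroupOf] at h
  simpa [AddSubgroup.relIndex] using h

private lemma mem_of_nsmul_mem {V : Type*} [AddCommGroup V] {H K : AddSubgroup V}
    {m n : ℕ} (hmn : Nat.Coprime m n) (hm : H.relIndex K = m) {x : V} (hxK : x ∈ K)
    (hn : n • x ∈ H) : x ∈ H := by
  have hcop : IsCoprime (m : ℤ) (n : ℤ) := Int.isCoprime_iff_gcd_eq_one.mpr hmn
  obtain ⟨u, v, huv⟩ := hcop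
  have hmx : m • x ∈ H := hm ▸ nsmul_relIndex_mem H K hxK
  have : x = u • ((m : ℕ) • x) + v • ((n : ℕ) • x) := by
    rw [← natCast_zsmul, ← natCast_zsmul, smul_smul, smul_smul, ← add_smul, huv, one_smul]
  rw [this]
  exact H.add_mem (H.zsmul_mem hmx u) (H.zsmul_mem hn v)

/-- Uniqueness of an intermediate subgroup of coprime relative indices. -/
private lemma intermediate_unique {V : Type*} [AddCommGroup V] {Γ Λ Λ₁ Λ₁' : AddSubgroup V}
    {m n : ℕ} (hmn : Nat.Coprime m n)
    (h1 : Λ₁ ≤ Γ) (h1' : Λ₁' ≤ Γ) (hL1 : Λ ≤ Λ₁) (hL1' : Λ ≤ Λ₁')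
    (hm : Λ₁.relIndex Γ = m) (hm' : Λ₁'.relIndex Γ = m)
    (hn : Λ.relIndex Λ₁ = n) (hn' : Λ.relIndex Λ₁' = n) : Λ₁ = Λ₁' := by
  have key : ∀ (A A' : AddSubgroup V), A ≤ Γ → A' ≤ Γ → Λ ≤ A → Λ ≤ A' →
      A.relIndex Γ = m → A'.relIndex Γ = m → Λ.relIndex A = n → A ≤ A' := by
    intro A A' hA hA' hLA hLA' hAm hA'm hLAn x hx
    have hnx : n • x ∈ Λ := hLAn ▸ nsmul_relIndex_mem Λ A hx
    exact mem_of_nsmul_mem hmn hA'm (hA hx) (hLA' hnx)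
  exact le_antisymm (key Λ₁ Λ₁' h1 h1' hL1 hL1' hm hm' hn)
    (key Λ₁' Λ₁ h1' h1 hL1' hL1 hm' hm hn')

private lemma relIndex_map_map {V : Type*} [AddCommGroup V] (f : V →+ V)
    (hf : Function.Injective f) (A B : AddSubgroup V) :
    (A.map f).relIndex (B.map f) = A.relIndex B := by
  rw [← AddSubgroup.relIndex_comap, AddSubgroup.comap_map_eq_self_of_injective hf]

private lemma IsSimilarity.injective {d : ℕ}
    {S : EuclideanSpace ℝ (Fin d) →ₗ[ℝ] EuclideanSpace ℝ (Fin d)}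
    (hS : IsSimilarity S) : Function.Injective S := by
  obtain ⟨c, hc, h⟩ := hS
  rw [injective_iff_map_eq_zero]
  intro u hu
  have h2 := h u u
  rw [hu, inner_zero_left] at h2
  have : (inner ℝ u u : ℝ) = 0 := by
    rcases mul_eq_zero.mp h2.symm with h3 | h3
    · exact absurd h3 hc.ne'
    · exact h3
  exact inner_self_eq_zero.mp this

private lemma IsSimilarity.comp {d : ℕ}
    {S T : EuclideanSpace ℝ (Fin d) →ₗ[ℝ] EuclideanSpace ℝ (Fin d)}
    (hS : IsSimilarity S) (hT : IsSimilarity T) : IsSimilarity (S ∘ₗ T) := by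
  obtain ⟨c, hc, h⟩ := hS
  obtain ⟨c', hc', h'⟩ := hT
  exact ⟨c * c', mul_pos hc hc', fun u v => by
    simp only [LinearMap.comp_apply, h, h', mul_assoc]⟩

/-- Every element of `Γ` scaled by the index lands in a sublattice of that index. -/
private lemma nsmul_mem_of_mem_SSL {d : ℕ} {Γ Λ : AddSubgroup (EuclideanSpace ℝ (Fin d))}
    {N : ℕ} (hΛ : Λ ∈ SSL Γ N) {x : EuclideanSpace ℝ (Fin d)} (hx : x ∈ Γ) : N • x ∈ Λ :=
  hΛ.2.1 ▸ nsmul_relIndex_mem Λ Γ hx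

/-- There are only finitely many similar sublattices of a given positive index. -/
private lemma finite_SSL {d : ℕ} (Γ : AddSubgroup (EuclideanSpace ℝ (Fin d)))
    (hΓ : IsLattice Γ) {N : ℕ} (hN : N ≠ 0) : (SSL Γ N).Finite := by
  obtain ⟨⟨b⟩, -⟩ := hΓ
  haveI : NeZero N := ⟨hN⟩
  set Γ' := AddSubgroup.toIntSubmodule Γ with hΓ'
  set f : Γ' → (Fin d → ZMod N) := fun x i => ((b.repr x i : ℤ) : ZMod N) with hf
  set Φ : AddSubgroup (EuclideanSpace ℝ (Fin d)) → Set (Fin d → ZMod N) :=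
    fun Λ => f '' {x : Γ' | (x : EuclideanSpace ℝ (Fin d)) ∈ Λ} with hΦ
  have key : ∀ Λ ∈ SSL Γ N, ∀ Λ' ∈ SSL Γ N, Φ Λ ⊆ Φ Λ' → Λ ≤ Λ' := by
    intro Λ hΛ Λ' hΛ' hsub x hx
    have hxΓ : x ∈ Γ := hΛ.1 hx
    have hmem : f ⟨x, hxΓ⟩ ∈ Φ Λ := ⟨⟨x, hxΓ⟩, hx, rfl⟩
    obtain ⟨y, hyΛ', hfy⟩ := hsub hmem
    -- the difference has all coordinates divisible by N
    set w : Γ' := ⟨x, hxΓ⟩ - y with hw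
    have hdvd : ∀ i, (N : ℤ) ∣ b.repr w i := by
      intro i
      have : ((b.repr w i : ℤ) : ZMod N) = 0 := by
        have : f y i = f ⟨x, hxΓ⟩ i := by rw [hfy]
        simp only [hf] at this
        rw [hw, map_sub]
        push_cast [Finsupp.sub_apply]
        rw [sub_eq_zero]
        exact this.symm
      exact_mod_cast (ZMod.intCast_zmod_eq_zero_iff_dvd _ N).mp this
    set z : Γ' := ∑ i, (b.repr w i / N) • b i with hz
    have hwz : w = (N : ℤ) • z := by
      rw [hz, Finset.smul_sum]
      conv_lhs => rw [← b.sum_repr w]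
      refine Finset.sum_congr rfl fun i _ => ?_
      rw [smul_smul]
      congr 1
      exact (Int.mul_ediv_cancel' (hdvd i)).symm
    have hzΓ : (z : EuclideanSpace ℝ (Fin d)) ∈ Γ := z.2
    have hNz : N • (z : EuclideanSpace ℝ (Fin d)) ∈ Λ' := nsmul_mem_of_mem_SSL hΛ' hzΓ
    have hcoe : x - (y : EuclideanSpace ℝ (Fin d)) = (N : ℤ) • (z : EuclideanSpace ℝ (Fin d)) := by
      have h := congrArg (Subtype.val) hwz
      rw [hw] at h
      simpa using h
    have hxy : x = (y : EuclideanSpace ℝ (Fin d)) + N • (z : EuclideanSpace ℝ (Fin d)) := by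
      rw [← natCast_zsmul, ← hcoe]; abel
    rw [hxy]
    exact Λ'.add_mem hyΛ' hNz
  have hinj : Set.InjOn Φ (SSL Γ N) := by
    intro Λ hΛ Λ' hΛ' h
    exact le_antisymm (key Λ hΛ Λ' hΛ' h.le) (key Λ' hΛ' Λ hΛ h.ge)
  exact Set.Finite.of_finite_image (Set.toFinite _) hinj

private lemma map_mem_SSL {d : ℕ} {Γ Λ₁ Λ₂ : AddSubgroup (EuclideanSpace ℝ (Fin d))} {m n : ℕ}
    {S₁ : EuclideanSpace ℝ (Fin d) →ₗ[ℝ] EuclideanSpace ℝ (Fin d)}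
    (hS₁ : IsSimilarity S₁) (himg : S₁ '' (Γ : Set (EuclideanSpace ℝ (Fin d))) = Λ₁)
    (h₁ : Λ₁ ∈ SSL Γ m) (h₂ : Λ₂ ∈ SSL Γ n) :
    Λ₂.map S₁.toAddMonoidHom ∈ SSL Γ (m * n) ∧ Λ₂.map S₁.toAddMonoidHom ≤ Λ₁ ∧
      (Λ₂.map S₁.toAddMonoidHom).relIndex Λ₁ = n := by
  have hmapΓ : Γ.map S₁.toAddMonoidHom = Λ₁ := by
    apply SetLike.ext'
    simpa [AddSubgroup.coe_map] using himg
  have hle : Λ₂.map S₁.toAddMonoidHom ≤ Λ₁ := by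
    rw [← hmapΓ]; exact AddSubgroup.map_mono h₂.1
  have hrel : (Λ₂.map S₁.toAddMonoidHom).relIndex Λ₁ = n := by
    rw [← hmapΓ, relIndex_map_map _ hS₁.injective, h₂.2.1]
  refine ⟨⟨hle.trans h₁.1, ?_, ?_⟩, hle, hrel⟩
  · rw [← AddSubgroup.relIndex_mul_relIndex (Λ₂.map S₁.toAddMonoidHom) Λ₁ Γ hle h₁.1,
      hrel, h₁.2.1, mul_comm]
  · obtain ⟨S₂, hS₂, himg₂⟩ := h₂.2.2
    refine ⟨S₁ ∘ₗ S₂, hS₁.comp hS₂, ?_⟩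
    have : (S₁ ∘ₗ S₂) '' (Γ : Set (EuclideanSpace ℝ (Fin d))) =
        S₁ '' (S₂ '' (Γ : Set (EuclideanSpace ℝ (Fin d)))) := by
      rw [Set.image_image]; rfl
    rw [this, himg₂, AddSubgroup.coe_map]
    rfl

/-- the counting function of similar sublattices of a lattice is
super-multiplicative: g(mn) ≥ g(m)·g(n) for coprime m and n. -/
theorem SSL_supermultiplicative {d : ℕ}
    (Γ : AddSubgroup (EuclideanSpace ℝ (Fin d))) (hΓ : IsLattice Γ)
    (m n : ℕ) (hmn : Nat.Coprime m n) :
    Nat.card (SSL Γ m) * Nat.card (SSL Γ n) ≤ Nat.card (SSL Γ (m * n)) := by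
  have hcard1 : Nat.card (SSL Γ 1) ≤ 1 := by
    have hsub : (SSL Γ 1).Subsingleton := by
      intro a ha c hc
      have hA : a = Γ := le_antisymm ha.1 (AddSubgroup.relIndex_eq_one.mp ha.2.1)
      have hC : c = Γ := le_antisymm hc.1 (AddSubgroup.relIndex_eq_one.mp hc.2.1)
      rw [hA, hC]
    haveI := hsub.coe_sort
    rcases isEmpty_or_nonempty ↥(SSL Γ 1) with he | hne
    · simp [Nat.card_of_isEmpty]
    · haveI : Unique ↥(SSL Γ 1) := uniqueOfSubsingleton (Classical.arbitrary _)
      simp [Nat.card_unique]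
  rcases Nat.eq_zero_or_pos m with hm0 | hm
  · subst hm0
    have hn1 : n = 1 := (Nat.coprime_zero_left n).mp hmn
    subst hn1
    simpa using Nat.mul_le_mul_left (Nat.card (SSL Γ 0)) hcard1
  rcases Nat.eq_zero_or_pos n with hn0 | hn
  · subst hn0
    have hm1 : m = 1 := (Nat.coprime_zero_right m).mp hmn
    subst hm1
    simpa [mul_comm] using Nat.mul_le_mul_right (Nat.card (SSL Γ 0)) hcard1
  -- main case: m, n ≥ 1
  have hfin : (SSL Γ (m * n)).Finite := finite_SSL Γ hΓ (by positivity)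
  haveI : Finite ↥(SSL Γ (m * n)) := hfin.to_subtype
  -- the choice of a similarity for each element of SSL Γ m
  set sim : ↥(SSL Γ m) → (EuclideanSpace ℝ (Fin d) →ₗ[ℝ] EuclideanSpace ℝ (Fin d)) :=
    fun x => x.2.2.2.choose with hsim
  have simspec : ∀ x : ↥(SSL Γ m), IsSimilarity (sim x) ∧
      (sim x) '' (Γ : Set (EuclideanSpace ℝ (Fin d))) =
        (((x : AddSubgroup (EuclideanSpace ℝ (Fin d)))) : Set (EuclideanSpace ℝ (Fin d))) :=
    fun x => x.2.2.2.choose_spec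
  set F : ↥(SSL Γ m) × ↥(SSL Γ n) → ↥(SSL Γ (m * n)) :=
    fun p => ⟨(p.2 : AddSubgroup _).map (sim p.1).toAddMonoidHom,
      (map_mem_SSL (simspec p.1).1 (simspec p.1).2 p.1.2 p.2.2).1⟩ with hF
  have hFinj : Function.Injective F := by
    intro p q hpq
    have hpq' : (p.2 : AddSubgroup _).map (sim p.1).toAddMonoidHom =
        (q.2 : AddSubgroup _).map (sim q.1).toAddMonoidHom := congrArg Subtype.val hpq
    have hp := map_mem_SSL (simspec p.1).1 (simspec p.1).2 p.1.2 p.2.2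
    have hq := map_mem_SSL (simspec q.1).1 (simspec q.1).2 q.1.2 q.2.2
    have h11 : (p.1 : AddSubgroup (EuclideanSpace ℝ (Fin d))) = (q.1 : AddSubgroup (EuclideanSpace ℝ (Fin d))) := by
      refine intermediate_unique hmn p.1.2.1 q.1.2.1 hp.2.1 (hpq' ▸ hq.2.1)
        p.1.2.2.1 q.1.2.2.1 hp.2.2 (hpq' ▸ hq.2.2)
    have h1 : p.1 = q.1 := Subtype.ext h11
    have h2 : p.2 = q.2 := by
      apply Subtype.ext
      refine AddSubgroup.map_injective (f := (sim p.1).toAddMonoidHom)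
        (simspec p.1).1.injective ?_
      rw [hpq', h1]
    exact Prod.ext h1 h2
  calc Nat.card (SSL Γ m) * Nat.card (SSL Γ n)
      = Nat.card (↥(SSL Γ m) × ↥(SSL Γ n)) := (Nat.card_prod _ _).symm
    _ ≤ Nat.card (SSL Γ (m * n)) := Nat.card_le_card_of_injective F hFinj
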